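/- For the three-web on the domain {(x¹,x²,y¹,y²) ∈ ℝ⁴ : x¹y² ≠ −1} given by f¹ = x¹ + y¹ + (1/2)(x¹)²y², f² = x² + y² + (1/2)x¹(y²)², with Δ := 1 + x¹y², the covariant derivatives of the torsion covector satisfy p₁₂ = p₂₂ = q₁₁ = q₂₁ = 0, p₁₁ = 2(y²)²/Δ⁴, q₂₂ = −2(x¹)²/Δ⁴, p₂₁ = (1 − x¹y²)/Δ⁴, q₁₂ = −(1 − x¹y²)/Δ⁴ = −p₂₁, and consequently the isoclinicity invariants satisfy p = q = (x¹y² − 1)/(2Δ⁴) (so this web belongs to the classes E₁₁₁ and G₃). -/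

import Mathlib

noncomputable section

open Matrix

/-- Partial derivative of `g` with respect to the `j`-th coordinate at the point `x`. -/
def pd (j : Fin 2) (g : (Fin 2 → ℝ) → ℝ) (x : Fin 2 → ℝ) : ℝ :=
  deriv (fun t => g (Function.update x j t)) (x j)

variable (f : Fin 2 → (Fin 2 → ℝ) → (Fin 2 → ℝ) → ℝ)

/-- Jacobian matrix `f̄ = (∂fⁱ/∂xʲ)` with respect to the first group of variables. -/
def fbar (x y : Fin 2 → ℝ) : Matrix (Fin 2) (Fin 2) ℝ :=
  Matrix.of fun i j => pd j (fun x' => f i x' y) x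

/-- Jacobian matrix `f̃ = (∂fⁱ/∂yʲ)` with respect to the second group of variables. -/
def ftil (x y : Fin 2 → ℝ) : Matrix (Fin 2) (Fin 2) ℝ :=
  Matrix.of fun i j => pd j (fun y' => f i x y') y

/-- Mixed second partial derivative `∂²fⁱ/∂xˡ∂yᵐ`. -/
def d2 (i l m : Fin 2) (x y : Fin 2 → ℝ) : ℝ :=
  pd m (fun y' => pd l (fun x' => f i x' y') x) y

/-- Connection coefficients
`Γⁱⱼₖ = −∑_{l,m} (∂²fⁱ/∂xˡ∂yᵐ) ḡˡⱼ g̃ᵐₖ`, where `ḡ = f̄⁻¹`, `g̃ = f̃⁻¹`. -/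
def Gam (i j k : Fin 2) (x y : Fin 2 → ℝ) : ℝ :=
  - ∑ l : Fin 2, ∑ m : Fin 2,
      d2 f i l m x y * (fbar f x y)⁻¹ l j * (ftil f x y)⁻¹ m k

/-- Torsion covector `aⱼ = ∑ₖ (Γᵏⱼₖ − Γᵏₖⱼ)`. -/
def aCov (j : Fin 2) (x y : Fin 2 → ℝ) : ℝ :=
  ∑ k : Fin 2, (Gam f k j k x y - Gam f k k j x y)

/-- Covariant derivative `p_{ik} = ∑ₘ (∂aᵢ/∂xᵐ) ḡᵐₖ − ∑ⱼ aⱼ Γʲₖᵢ`. -/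
def pCov (i k : Fin 2) (x y : Fin 2 → ℝ) : ℝ :=
  (∑ m : Fin 2, pd m (fun x' => aCov f i x' y) x * (fbar f x y)⁻¹ m k)
    - ∑ j : Fin 2, aCov f j x y * Gam f j k i x y

/-- Covariant derivative `q_{ik} = ∑ₘ (∂aᵢ/∂yᵐ) g̃ᵐₖ − ∑ⱼ aⱼ Γʲᵢₖ`. -/
def qCov (i k : Fin 2) (x y : Fin 2 → ℝ) : ℝ :=
  (∑ m : Fin 2, pd m (fun y' => aCov f i x y') y * (ftil f x y)⁻¹ m k)
    - ∑ j : Fin 2, aCov f j x y * Gam f j i k x y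

/-- Isoclinicity invariant `p = (p₁₂ − p₂₁)/2`. -/
def pIso (x y : Fin 2 → ℝ) : ℝ := (pCov f 0 1 x y - pCov f 1 0 x y) / 2

/-- Isoclinicity invariant `q = (q₁₂ − q₂₁)/2`. -/
def qIso (x y : Fin 2 → ℝ) : ℝ := (qCov f 0 1 x y - qCov f 1 0 x y) / 2


/-- The web `f¹ = x¹ + y¹ + (1/2)(x¹)²y²`, `f² = x² + y² + (1/2)x¹(y²)²`.
(Indices: `x 0 ↦ x¹`, `x 1 ↦ x²`, `y 0 ↦ y¹`, `y 1 ↦ y²`.) -/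
noncomputable def webF : Fin 2 → (Fin 2 → ℝ) → (Fin 2 → ℝ) → ℝ :=
  ![fun x y => x 0 + y 0 + (1/2) * (x 0)^2 * y 1,
    fun x y => x 1 + y 1 + (1/2) * x 0 * (y 1)^2]


lemma d_affine (a b t : ℝ) : deriv (fun s : ℝ => a + b * s) t = b := by
  have h : HasDerivAt (fun s : ℝ => a + b * s) b t := by
    have := ((hasDerivAt_id t).const_mul b).const_add a
    exact this.congr_deriv (by ring)
  exact h.deriv

lemma d_quad (a b c t : ℝ) : deriv (fun s : ℝ => a + b * s + c * s ^ 2) t = b + 2 * c * t := by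
  have h : HasDerivAt (fun s : ℝ => a + b * s + c * s ^ 2) (b + 2 * c * t) t := by
    have := (((hasDerivAt_id t).const_mul b).const_add a).add ((hasDerivAt_pow 2 t).const_mul c)
    simp only [id_eq] at this
    exact this.congr_deriv (by push_cast; ring)
  exact h.deriv

lemma d_rat (a c b t : ℝ) (h : 1 + t * b ≠ 0) :
    deriv (fun s : ℝ => (a + c * s) / (1 + s * b) ^ 2) t
      = (c * (1 + t * b) - (a + c * t) * (2 * b)) / (1 + t * b) ^ 3 := by
  have hd : HasDerivAt (fun s : ℝ => (1 + s * b) ^ 2) (2 * (1 + t * b) * b) t := by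
    have := (((hasDerivAt_id t).mul_const b).const_add 1).pow 2
    simp only [id_eq] at this
    exact this.congr_deriv (by push_cast; ring)
  have hn : HasDerivAt (fun s : ℝ => a + c * s) c t := by
    have := ((hasDerivAt_id t).const_mul c).const_add a
    exact this.congr_deriv (by ring)
  have hdv := hn.div hd (pow_ne_zero 2 h)
  rw [show (fun s : ℝ => (a + c * s) / (1 + s * b) ^ 2)
      = ((fun s => a + c * s) / fun s => (1 + s * b) ^ 2) from rfl, hdv.deriv]
  field_simp

lemma pdx00 (x y : Fin 2 → ℝ) : pd 0 (fun x' => webF 0 x' y) x = 1 + x 0 * y 1 := by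
  have e : (fun t : ℝ => webF 0 (Function.update x 0 t) y)
      = fun s => (y 0) + 1 * s + (1/2 * y 1) * s ^ 2 := by
    funext s; simp [webF, Function.update]; ring
  rw [pd, e, d_quad]; ring

lemma pdx01 (x y : Fin 2 → ℝ) : pd 1 (fun x' => webF 0 x' y) x = 0 := by
  have e : (fun t : ℝ => webF 0 (Function.update x 1 t) y)
      = fun _ => x 0 + y 0 + (1/2) * (x 0)^2 * y 1 := by
    funext s; simp [webF, Function.update]
  rw [pd, e, deriv_const]

lemma pdx10 (x y : Fin 2 → ℝ) : pd 0 (fun x' => webF 1 x' y) x = 1/2 * (y 1) ^ 2 := by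
  have e : (fun t : ℝ => webF 1 (Function.update x 0 t) y)
      = fun s => (x 1 + y 1) + (1/2 * (y 1)^2) * s := by
    funext s; simp [webF, Function.update]; ring
  rw [pd, e, d_affine]

lemma pdx11 (x y : Fin 2 → ℝ) : pd 1 (fun x' => webF 1 x' y) x = 1 := by
  have e : (fun t : ℝ => webF 1 (Function.update x 1 t) y)
      = fun s => (y 1 + 1/2 * x 0 * (y 1)^2) + 1 * s := by
    funext s; simp [webF, Function.update]; ring
  rw [pd, e, d_affine]

lemma pdy00 (x y : Fin 2 → ℝ) : pd 0 (fun y' => webF 0 x y') y = 1 := by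
  have e : (fun t : ℝ => webF 0 x (Function.update y 0 t))
      = fun s => (x 0 + 1/2 * (x 0)^2 * y 1) + 1 * s := by
    funext s; simp [webF, Function.update]; ring
  rw [pd, e, d_affine]

lemma pdy01 (x y : Fin 2 → ℝ) : pd 1 (fun y' => webF 0 x y') y = 1/2 * (x 0) ^ 2 := by
  have e : (fun t : ℝ => webF 0 x (Function.update y 1 t))
      = fun s => (x 0 + y 0) + (1/2 * (x 0)^2) * s := by
    funext s; simp [webF, Function.update]
  rw [pd, e, d_affine]

lemma pdy10 (x y : Fin 2 → ℝ) : pd 0 (fun y' => webF 1 x y') y = 0 := by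
  have e : (fun t : ℝ => webF 1 x (Function.update y 0 t))
      = fun _ => x 1 + y 1 + 1/2 * x 0 * (y 1)^2 := by
    funext s; simp [webF, Function.update]
  rw [pd, e, deriv_const]

lemma pdy11 (x y : Fin 2 → ℝ) : pd 1 (fun y' => webF 1 x y') y = 1 + x 0 * y 1 := by
  have e : (fun t : ℝ => webF 1 x (Function.update y 1 t))
      = fun s => (x 1) + 1 * s + (1/2 * x 0) * s ^ 2 := by
    funext s; simp [webF, Function.update]
  rw [pd, e, d_quad]; ring

lemma webF_fbar (x y : Fin 2 → ℝ) :
    fbar webF x y = !![1 + x 0 * y 1, 0; 1/2 * (y 1)^2, 1] := by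
  ext i j
  fin_cases i <;> fin_cases j <;>
    simp [fbar, pdx00, pdx01, pdx10, pdx11]

lemma webF_ftil (x y : Fin 2 → ℝ) :
    ftil webF x y = !![1, 1/2 * (x 0)^2; 0, 1 + x 0 * y 1] := by
  ext i j
  fin_cases i <;> fin_cases j <;>
    simp [ftil, pdy00, pdy01, pdy10, pdy11]

lemma webF_fbar_inv (x y : Fin 2 → ℝ) (hΔ : 1 + x 0 * y 1 ≠ 0) :
    (fbar webF x y)⁻¹ = !![(1 + x 0 * y 1)⁻¹, 0;
        -(1/2 * (y 1)^2) * (1 + x 0 * y 1)⁻¹, 1] := by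
  rw [webF_fbar]
  apply Matrix.inv_eq_right_inv
  ext i j
  fin_cases i <;> fin_cases j <;>
    · simp [Matrix.mul_apply, Fin.sum_univ_two]
      try field_simp
      try ring

lemma webF_ftil_inv (x y : Fin 2 → ℝ) (hΔ : 1 + x 0 * y 1 ≠ 0) :
    (ftil webF x y)⁻¹ = !![1, -(1/2 * (x 0)^2) * (1 + x 0 * y 1)⁻¹;
        0, (1 + x 0 * y 1)⁻¹] := by
  rw [webF_ftil]
  apply Matrix.inv_eq_right_inv
  ext i j
  fin_cases i <;> fin_cases j <;>
    · simp [Matrix.mul_apply, Fin.sum_univ_two]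
      try field_simp
      try ring

lemma d2_000 (x y : Fin 2 → ℝ) : d2 webF 0 0 0 x y = 0 := by
  simp only [d2, pdx00]
  have e : (fun t : ℝ => 1 + x 0 * Function.update y 0 t 1) = fun _ => 1 + x 0 * y 1 := by
    funext s; simp [Function.update]
  rw [pd, e, deriv_const]

lemma d2_001 (x y : Fin 2 → ℝ) : d2 webF 0 0 1 x y = x 0 := by
  simp only [d2, pdx00]
  have e : (fun t : ℝ => 1 + x 0 * Function.update y 1 t 1) = fun s => 1 + x 0 * s := by
    funext s; simp [Function.update]
  rw [pd, e, d_affine]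

lemma d2_010 (x y : Fin 2 → ℝ) : d2 webF 0 1 0 x y = 0 := by
  simp only [d2, pdx01]
  rw [pd, deriv_const]

lemma d2_011 (x y : Fin 2 → ℝ) : d2 webF 0 1 1 x y = 0 := by
  simp only [d2, pdx01]
  rw [pd, deriv_const]

lemma d2_100 (x y : Fin 2 → ℝ) : d2 webF 1 0 0 x y = 0 := by
  simp only [d2, pdx10]
  have e : (fun t : ℝ => 1/2 * (Function.update y 0 t 1) ^ 2) = fun _ => 1/2 * (y 1)^2 := by
    funext s; simp [Function.update]
  rw [pd, e, deriv_const]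

lemma d2_101 (x y : Fin 2 → ℝ) : d2 webF 1 0 1 x y = y 1 := by
  simp only [d2, pdx10]
  have e : (fun t : ℝ => 1/2 * (Function.update y 1 t 1) ^ 2)
      = fun s => 0 + 0 * s + (1/2) * s ^ 2 := by
    funext s; simp [Function.update]
  rw [pd, e, d_quad]; ring

lemma d2_110 (x y : Fin 2 → ℝ) : d2 webF 1 1 0 x y = 0 := by
  simp only [d2, pdx11]
  rw [pd, deriv_const]

lemma d2_111 (x y : Fin 2 → ℝ) : d2 webF 1 1 1 x y = 0 := by
  simp only [d2, pdx11]
  rw [pd, deriv_const]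

lemma gam001 (x y : Fin 2 → ℝ) (hΔ : 1 + x 0 * y 1 ≠ 0) :
    Gam webF 0 0 1 x y = -(x 0) / (1 + x 0 * y 1)^2 := by
  rw [Gam]
  simp only [Fin.sum_univ_two, d2_000, d2_001, d2_010, d2_011,
    webF_fbar_inv x y hΔ, webF_ftil_inv x y hΔ]
  norm_num [Matrix.cons_val_zero, Matrix.cons_val_one, Matrix.head_cons]
  field_simp

lemma gam101 (x y : Fin 2 → ℝ) (hΔ : 1 + x 0 * y 1 ≠ 0) :
    Gam webF 1 0 1 x y = -(y 1) / (1 + x 0 * y 1)^2 := by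
  rw [Gam]
  simp only [Fin.sum_univ_two, d2_100, d2_101, d2_110, d2_111,
    webF_fbar_inv x y hΔ, webF_ftil_inv x y hΔ]
  norm_num [Matrix.cons_val_zero, Matrix.cons_val_one, Matrix.head_cons]
  field_simp

lemma gam000 (x y : Fin 2 → ℝ) (hΔ : 1 + x 0 * y 1 ≠ 0) :
    Gam webF 0 0 0 x y = 0 := by
  rw [Gam]
  simp only [Fin.sum_univ_two, d2_000, d2_001, d2_010, d2_011,
    webF_fbar_inv x y hΔ, webF_ftil_inv x y hΔ]
  norm_num [Matrix.cons_val_zero, Matrix.cons_val_one, Matrix.head_cons]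

lemma gam010 (x y : Fin 2 → ℝ) (hΔ : 1 + x 0 * y 1 ≠ 0) :
    Gam webF 0 1 0 x y = 0 := by
  rw [Gam]
  simp only [Fin.sum_univ_two, d2_000, d2_001, d2_010, d2_011,
    webF_fbar_inv x y hΔ, webF_ftil_inv x y hΔ]
  norm_num [Matrix.cons_val_zero, Matrix.cons_val_one, Matrix.head_cons]

lemma gam011 (x y : Fin 2 → ℝ) (hΔ : 1 + x 0 * y 1 ≠ 0) :
    Gam webF 0 1 1 x y = 0 := by
  rw [Gam]
  simp only [Fin.sum_univ_two, d2_000, d2_001, d2_010, d2_011,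
    webF_fbar_inv x y hΔ, webF_ftil_inv x y hΔ]
  norm_num [Matrix.cons_val_zero, Matrix.cons_val_one, Matrix.head_cons]

lemma gam100 (x y : Fin 2 → ℝ) (hΔ : 1 + x 0 * y 1 ≠ 0) :
    Gam webF 1 0 0 x y = 0 := by
  rw [Gam]
  simp only [Fin.sum_univ_two, d2_100, d2_101, d2_110, d2_111,
    webF_fbar_inv x y hΔ, webF_ftil_inv x y hΔ]
  norm_num [Matrix.cons_val_zero, Matrix.cons_val_one, Matrix.head_cons]

lemma gam110 (x y : Fin 2 → ℝ) (hΔ : 1 + x 0 * y 1 ≠ 0) :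
    Gam webF 1 1 0 x y = 0 := by
  rw [Gam]
  simp only [Fin.sum_univ_two, d2_100, d2_101, d2_110, d2_111,
    webF_fbar_inv x y hΔ, webF_ftil_inv x y hΔ]
  norm_num [Matrix.cons_val_zero, Matrix.cons_val_one, Matrix.head_cons]

lemma gam111 (x y : Fin 2 → ℝ) (hΔ : 1 + x 0 * y 1 ≠ 0) :
    Gam webF 1 1 1 x y = 0 := by
  rw [Gam]
  simp only [Fin.sum_univ_two, d2_100, d2_101, d2_110, d2_111,
    webF_fbar_inv x y hΔ, webF_ftil_inv x y hΔ]
  norm_num [Matrix.cons_val_zero, Matrix.cons_val_one, Matrix.head_cons]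

lemma webF_aCov0 (x y : Fin 2 → ℝ) (hΔ : 1 + x 0 * y 1 ≠ 0) :
    aCov webF 0 x y = -(y 1) / (1 + x 0 * y 1)^2 := by
  rw [aCov, Fin.sum_univ_two, gam101 x y hΔ, gam110 x y hΔ]
  ring

lemma webF_aCov1 (x y : Fin 2 → ℝ) (hΔ : 1 + x 0 * y 1 ≠ 0) :
    aCov webF 1 x y = x 0 / (1 + x 0 * y 1)^2 := by
  rw [aCov, Fin.sum_univ_two, gam010 x y hΔ, gam001 x y hΔ]
  ring

lemma pdx_a0_0 (x y : Fin 2 → ℝ) (hΔ : 1 + x 0 * y 1 ≠ 0) :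
    pd 0 (fun x' => aCov webF 0 x' y) x = 2 * (y 1)^2 / (1 + x 0 * y 1)^3 := by
  rw [pd]
  have hcont : ContinuousAt (fun t : ℝ => 1 + t * y 1) (x 0) := by fun_prop
  have hev : (fun t => aCov webF 0 (Function.update x 0 t) y)
      =ᶠ[nhds (x 0)] fun t => (-(y 1) + 0 * t) / (1 + t * y 1) ^ 2 := by
    filter_upwards [hcont.eventually_ne hΔ] with t ht
    rw [webF_aCov0 _ y (by simpa [Function.update] using ht)]
    simp [Function.update]
  rw [hev.deriv_eq, d_rat _ _ _ _ hΔ]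
  field_simp
  ring

lemma pdx_a1_0 (x y : Fin 2 → ℝ) (hΔ : 1 + x 0 * y 1 ≠ 0) :
    pd 0 (fun x' => aCov webF 1 x' y) x = (1 - x 0 * y 1) / (1 + x 0 * y 1)^3 := by
  rw [pd]
  have hcont : ContinuousAt (fun t : ℝ => 1 + t * y 1) (x 0) := by fun_prop
  have hev : (fun t => aCov webF 1 (Function.update x 0 t) y)
      =ᶠ[nhds (x 0)] fun t => (0 + 1 * t) / (1 + t * y 1) ^ 2 := by
    filter_upwards [hcont.eventually_ne hΔ] with t ht
    rw [webF_aCov1 _ y (by simpa [Function.update] using ht)]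
    simp [Function.update]
  rw [hev.deriv_eq, d_rat _ _ _ _ hΔ]
  field_simp
  ring

lemma pdx_a0_1 (x y : Fin 2 → ℝ) (hΔ : 1 + x 0 * y 1 ≠ 0) :
    pd 1 (fun x' => aCov webF 0 x' y) x = 0 := by
  rw [pd]
  have e : (fun t => aCov webF 0 (Function.update x 1 t) y)
      = fun _ => -(y 1) / (1 + x 0 * y 1)^2 := by
    funext t
    rw [webF_aCov0 _ y (by simpa [Function.update] using hΔ)]
    simp [Function.update]
  rw [e, deriv_const]

lemma pdx_a1_1 (x y : Fin 2 → ℝ) (hΔ : 1 + x 0 * y 1 ≠ 0) :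
    pd 1 (fun x' => aCov webF 1 x' y) x = 0 := by
  rw [pd]
  have e : (fun t => aCov webF 1 (Function.update x 1 t) y)
      = fun _ => x 0 / (1 + x 0 * y 1)^2 := by
    funext t
    rw [webF_aCov1 _ y (by simpa [Function.update] using hΔ)]
    simp [Function.update]
  rw [e, deriv_const]

lemma pdy_a0_0 (x y : Fin 2 → ℝ) (hΔ : 1 + x 0 * y 1 ≠ 0) :
    pd 0 (fun y' => aCov webF 0 x y') y = 0 := by
  rw [pd]
  have e : (fun t => aCov webF 0 x (Function.update y 0 t))
      = fun _ => -(y 1) / (1 + x 0 * y 1)^2 := by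
    funext t
    rw [webF_aCov0 x _ (by simpa [Function.update] using hΔ)]
    simp [Function.update]
  rw [e, deriv_const]

lemma pdy_a1_0 (x y : Fin 2 → ℝ) (hΔ : 1 + x 0 * y 1 ≠ 0) :
    pd 0 (fun y' => aCov webF 1 x y') y = 0 := by
  rw [pd]
  have e : (fun t => aCov webF 1 x (Function.update y 0 t))
      = fun _ => x 0 / (1 + x 0 * y 1)^2 := by
    funext t
    rw [webF_aCov1 x _ (by simpa [Function.update] using hΔ)]
    simp [Function.update]
  rw [e, deriv_const]

lemma pdy_a0_1 (x y : Fin 2 → ℝ) (hΔ : 1 + x 0 * y 1 ≠ 0) :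
    pd 1 (fun y' => aCov webF 0 x y') y = (x 0 * y 1 - 1) / (1 + x 0 * y 1)^3 := by
  rw [pd]
  have hΔ' : 1 + y 1 * x 0 ≠ 0 := by rwa [mul_comm] at hΔ
  have hcont : ContinuousAt (fun t : ℝ => 1 + t * x 0) (y 1) := by fun_prop
  have hev : (fun t => aCov webF 0 x (Function.update y 1 t))
      =ᶠ[nhds (y 1)] fun t => (0 + (-1) * t) / (1 + t * x 0) ^ 2 := by
    filter_upwards [hcont.eventually_ne hΔ'] with t ht
    rw [webF_aCov0 x _ (by
      simp only [Function.update_self]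
      rw [mul_comm]; exact ht)]
    simp [Function.update]; ring
  rw [hev.deriv_eq, d_rat _ _ _ _ hΔ']
  rw [show (1 : ℝ) + y 1 * x 0 = 1 + x 0 * y 1 by ring]
  field_simp
  ring

lemma pdy_a1_1 (x y : Fin 2 → ℝ) (hΔ : 1 + x 0 * y 1 ≠ 0) :
    pd 1 (fun y' => aCov webF 1 x y') y = -(2 * (x 0)^2) / (1 + x 0 * y 1)^3 := by
  rw [pd]
  have hΔ' : 1 + y 1 * x 0 ≠ 0 := by rwa [mul_comm] at hΔ
  have hcont : ContinuousAt (fun t : ℝ => 1 + t * x 0) (y 1) := by fun_prop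
  have hev : (fun t => aCov webF 1 x (Function.update y 1 t))
      =ᶠ[nhds (y 1)] fun t => (x 0 + 0 * t) / (1 + t * x 0) ^ 2 := by
    filter_upwards [hcont.eventually_ne hΔ'] with t ht
    rw [webF_aCov1 x _ (by
      simp only [Function.update_self]
      rw [mul_comm]; exact ht)]
    simp [Function.update]; ring
  rw [hev.deriv_eq, d_rat _ _ _ _ hΔ']
  rw [show (1 : ℝ) + y 1 * x 0 = 1 + x 0 * y 1 by ring]
  field_simp
  ring

lemma pC01 (x y : Fin 2 → ℝ) (hΔ : 1 + x 0 * y 1 ≠ 0) : pCov webF 0 1 x y = 0 := by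
  rw [pCov, Fin.sum_univ_two, Fin.sum_univ_two, pdx_a0_0 x y hΔ, pdx_a0_1 x y hΔ,
    gam010 x y hΔ, gam110 x y hΔ, webF_fbar_inv x y hΔ]
  norm_num [Matrix.cons_val_zero, Matrix.cons_val_one, Matrix.head_cons]

lemma pC11 (x y : Fin 2 → ℝ) (hΔ : 1 + x 0 * y 1 ≠ 0) : pCov webF 1 1 x y = 0 := by
  rw [pCov, Fin.sum_univ_two, Fin.sum_univ_two, pdx_a1_0 x y hΔ, pdx_a1_1 x y hΔ,
    gam011 x y hΔ, gam111 x y hΔ, webF_fbar_inv x y hΔ]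
  norm_num [Matrix.cons_val_zero, Matrix.cons_val_one, Matrix.head_cons]

lemma pC00 (x y : Fin 2 → ℝ) (hΔ : 1 + x 0 * y 1 ≠ 0) :
    pCov webF 0 0 x y = 2 * (y 1)^2 / (1 + x 0 * y 1)^4 := by
  rw [pCov, Fin.sum_univ_two, Fin.sum_univ_two, pdx_a0_0 x y hΔ, pdx_a0_1 x y hΔ,
    gam000 x y hΔ, gam100 x y hΔ, webF_fbar_inv x y hΔ]
  norm_num [Matrix.cons_val_zero, Matrix.cons_val_one, Matrix.head_cons]
  field_simp

lemma pC10 (x y : Fin 2 → ℝ) (hΔ : 1 + x 0 * y 1 ≠ 0) :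
    pCov webF 1 0 x y = (1 - x 0 * y 1) / (1 + x 0 * y 1)^4 := by
  rw [pCov, Fin.sum_univ_two, Fin.sum_univ_two, pdx_a1_0 x y hΔ, pdx_a1_1 x y hΔ,
    gam001 x y hΔ, gam101 x y hΔ, webF_aCov0 x y hΔ, webF_aCov1 x y hΔ, webF_fbar_inv x y hΔ]
  norm_num [Matrix.cons_val_zero, Matrix.cons_val_one, Matrix.head_cons]
  field_simp
  ring1

lemma qC00 (x y : Fin 2 → ℝ) (hΔ : 1 + x 0 * y 1 ≠ 0) : qCov webF 0 0 x y = 0 := by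
  rw [qCov, Fin.sum_univ_two, Fin.sum_univ_two, pdy_a0_0 x y hΔ, pdy_a0_1 x y hΔ,
    gam000 x y hΔ, gam100 x y hΔ, webF_ftil_inv x y hΔ]
  norm_num [Matrix.cons_val_zero, Matrix.cons_val_one, Matrix.head_cons]

lemma qC10 (x y : Fin 2 → ℝ) (hΔ : 1 + x 0 * y 1 ≠ 0) : qCov webF 1 0 x y = 0 := by
  rw [qCov, Fin.sum_univ_two, Fin.sum_univ_two, pdy_a1_0 x y hΔ, pdy_a1_1 x y hΔ,
    gam010 x y hΔ, gam110 x y hΔ, webF_ftil_inv x y hΔ]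
  norm_num [Matrix.cons_val_zero, Matrix.cons_val_one, Matrix.head_cons]

lemma qC11 (x y : Fin 2 → ℝ) (hΔ : 1 + x 0 * y 1 ≠ 0) :
    qCov webF 1 1 x y = -(2 * (x 0)^2) / (1 + x 0 * y 1)^4 := by
  rw [qCov, Fin.sum_univ_two, Fin.sum_univ_two, pdy_a1_0 x y hΔ, pdy_a1_1 x y hΔ,
    gam011 x y hΔ, gam111 x y hΔ, webF_ftil_inv x y hΔ]
  norm_num [Matrix.cons_val_zero, Matrix.cons_val_one, Matrix.head_cons]
  field_simp

lemma qC01 (x y : Fin 2 → ℝ) (hΔ : 1 + x 0 * y 1 ≠ 0) :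
    qCov webF 0 1 x y = -((1 - x 0 * y 1) / (1 + x 0 * y 1)^4) := by
  rw [qCov, Fin.sum_univ_two, Fin.sum_univ_two, pdy_a0_0 x y hΔ, pdy_a0_1 x y hΔ,
    gam001 x y hΔ, gam101 x y hΔ, webF_aCov0 x y hΔ, webF_aCov1 x y hΔ, webF_ftil_inv x y hΔ]
  norm_num [Matrix.cons_val_zero, Matrix.cons_val_one, Matrix.head_cons]
  field_simp
  ring1

/-- For the web `webF` on the domain `x¹y² ≠ −1`, with `Δ = 1 + x¹y²`, the
covariant derivatives of the torsion covector satisfy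
`p₁₂ = p₂₂ = q₁₁ = q₂₁ = 0`, `p₁₁ = 2(y²)²/Δ⁴`, `q₂₂ = −2(x¹)²/Δ⁴`,
`p₂₁ = (1 − x¹y²)/Δ⁴`, `q₁₂ = −(1 − x¹y²)/Δ⁴ = −p₂₁`, and consequently the
isoclinicity invariants satisfy `p = q = (x¹y² − 1)/(2Δ⁴)`
(classes E₁₁₁ and G₃). -/
theorem webF_covariant_derivatives (x y : Fin 2 → ℝ)
    (h : x 0 * y 1 ≠ -1) (Δ : ℝ) (hΔ : Δ = 1 + x 0 * y 1) :
    pCov webF 0 1 x y = 0 ∧ pCov webF 1 1 x y = 0 ∧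
    qCov webF 0 0 x y = 0 ∧ qCov webF 1 0 x y = 0 ∧
    pCov webF 0 0 x y = 2 * (y 1)^2 / Δ^4 ∧
    qCov webF 1 1 x y = -(2 * (x 0)^2) / Δ^4 ∧
    pCov webF 1 0 x y = (1 - x 0 * y 1) / Δ^4 ∧
    qCov webF 0 1 x y = -((1 - x 0 * y 1) / Δ^4) ∧
    qCov webF 0 1 x y = -(pCov webF 1 0 x y) ∧
    pIso webF x y = (x 0 * y 1 - 1) / (2 * Δ^4) ∧
    qIso webF x y = (x 0 * y 1 - 1) / (2 * Δ^4) := by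
  have hΔ0 : 1 + x 0 * y 1 ≠ 0 := fun he => h (by linarith)
  subst hΔ
  refine ⟨pC01 x y hΔ0, pC11 x y hΔ0, qC00 x y hΔ0, qC10 x y hΔ0, pC00 x y hΔ0,
    qC11 x y hΔ0, pC10 x y hΔ0, qC01 x y hΔ0, ?_, ?_, ?_⟩
  · rw [qC01 x y hΔ0, pC10 x y hΔ0]
  · rw [pIso, pC01 x y hΔ0, pC10 x y hΔ0]
    field_simp
    ring1
  · rw [qIso, qC01 x y hΔ0, qC10 x y hΔ0]
    field_simp
    ring1


end
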